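/- For μ ∈ ℝ and σ > 0, ∫_0^{2π} exp(i x) N(x; μ, σ) dx = (1/2) exp(i μ − σ²/2) · (erf((μ + i σ²)/(√2 σ)) − erf((μ − 2π + i σ²)/(√2 σ))), where erf is the complex error function. -/

import Mathlib

open MeasureTheory

/-- One-dimensional Gaussian density with mean `μ` and standard deviation `σ`. -/
noncomputable def gaussDensity (μ σ x : ℝ) : ℝ :=
  (1 / (Real.sqrt (2 * Real.pi) * σ)) * Real.exp (-(x - μ) ^ 2 / (2 * σ ^ 2))

/-- Complex error function: `(2/√π)` times the integral of `exp(-w²)` along the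
segment from `0` to `z`. -/
noncomputable def cerf (z : ℂ) : ℂ :=
  (2 / (Real.sqrt Real.pi : ℂ)) * ∫ t in (0 : ℝ)..1, z * Complex.exp (-((t : ℂ) * z) ^ 2)

/-- complex derivative of `w ↦ w * exp(-(w*a)^2)`. -/
lemma aux_hasDerivAt (a w : ℂ) :
    HasDerivAt (fun w : ℂ => w * Complex.exp (-(w * a) ^ 2))
      ((1 - 2 * w ^ 2 * a ^ 2) * Complex.exp (-(w * a) ^ 2)) w := by
  have h1 : HasDerivAt (fun w : ℂ => -(w * a) ^ 2) (-(2 * (w * a) * a)) w := by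
    have := (((hasDerivAt_id w).mul_const a).fun_pow 2).neg
    simpa [Pi.neg_def] using this
  have h2 := h1.cexp
  have h3 := (hasDerivAt_id w).fun_mul h2
  simp only [id_eq] at h3
  refine h3.congr_deriv ?_
  ring

lemma cerf_hasDerivAt (z : ℂ) :
    HasDerivAt cerf ((2 / (Real.sqrt Real.pi : ℂ)) * Complex.exp (-z ^ 2)) z := by
  have key : HasDerivAt (fun z : ℂ => ∫ t in (0 : ℝ)..1, z * Complex.exp (-((t : ℂ) * z) ^ 2))
      (Complex.exp (-z ^ 2)) z := by
    set R : ℝ := ‖z‖ + 1 with hR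
    have hRpos : 0 < R := by positivity
    have main := intervalIntegral.hasDerivAt_integral_of_dominated_loc_of_deriv_le
      (F := fun (x : ℂ) (t : ℝ) => x * Complex.exp (-((t : ℂ) * x) ^ 2))
      (F' := fun (x : ℂ) (t : ℝ) => (1 - 2 * (t : ℂ) ^ 2 * x ^ 2) * Complex.exp (-((t : ℂ) * x) ^ 2))
      (x₀ := z) (a := 0) (b := 1) (μ := volume)
      (bound := fun _ => (1 + 2 * R ^ 2) * Real.exp (R ^ 2))
      (Metric.ball_mem_nhds z one_pos) ?_ ?_ ?_ ?_ ?_ ?_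
    · obtain ⟨-, hd⟩ := main
      refine hd.congr_deriv ?_
      -- ∫ t in 0..1, (1 - 2 t² z²) exp(-(t z)²) = exp(-z²)
      have ftc : ∀ t ∈ Set.uIcc (0:ℝ) 1,
          HasDerivAt (fun t : ℝ => (t : ℂ) * Complex.exp (-((t : ℂ) * z) ^ 2))
            ((1 - 2 * (t : ℂ) ^ 2 * z ^ 2) * Complex.exp (-((t : ℂ) * z) ^ 2)) t := by
        intro t _
        exact (aux_hasDerivAt z (t : ℂ)).comp_ofReal
      have hInt : IntervalIntegrable
          (fun t : ℝ => (1 - 2 * (t : ℂ) ^ 2 * z ^ 2) * Complex.exp (-((t : ℂ) * z) ^ 2))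
          volume 0 1 := by
        apply Continuous.intervalIntegrable
        fun_prop
      have := intervalIntegral.integral_eq_sub_of_hasDerivAt ftc hInt
      rw [this]
      simp
    · filter_upwards with x
      apply Continuous.aestronglyMeasurable
      fun_prop
    · apply Continuous.intervalIntegrable; fun_prop
    · apply Continuous.aestronglyMeasurable (by fun_prop) |>.restrict
    · filter_upwards with t ht x hx
      have hxR : ‖x‖ ≤ R := by
        have := mem_ball_iff_norm.mp hx
        have h2 := norm_sub_norm_le x z
        simp only [hR]
        linarith
      have ht1 : |t| ≤ 1 := by
        rw [Set.uIoc_of_le (by norm_num : (0:ℝ) ≤ 1)] at ht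
        rw [abs_le]; constructor <;> [linarith [ht.1]; linarith [ht.2]]
      have htx : ‖(t : ℂ) * x‖ ≤ R := by
        rw [norm_mul, Complex.norm_real]
        calc ‖t‖ * ‖x‖ ≤ 1 * R := by
              apply mul_le_mul _ hxR (norm_nonneg _) zero_le_one
              simpa using ht1
          _ = R := one_mul R
      rw [norm_mul]
      have hb1 : ‖(1 : ℂ) - 2 * (t : ℂ) ^ 2 * x ^ 2‖ ≤ 1 + 2 * R ^ 2 := by
        calc ‖(1 : ℂ) - 2 * (t : ℂ) ^ 2 * x ^ 2‖
            ≤ ‖(1 : ℂ)‖ + ‖2 * (t : ℂ) ^ 2 * x ^ 2‖ := norm_sub_le _ _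
          _ ≤ 1 + 2 * R ^ 2 := by
              rw [norm_one]
              gcongr
              have : ‖2 * (t : ℂ) ^ 2 * x ^ 2‖ = 2 * ‖(t:ℂ) * x‖ ^ 2 := by
                rw [norm_mul, norm_mul, norm_pow, norm_pow, norm_mul]
                simp only [Complex.norm_ofNat]
                ring
              rw [this]
              gcongr
      have hb2 : ‖Complex.exp (-((t : ℂ) * x) ^ 2)‖ ≤ Real.exp (R ^ 2) := by
        rw [Complex.norm_exp]
        apply Real.exp_le_exp.mpr
        calc (-((t : ℂ) * x) ^ 2).re ≤ ‖-((t : ℂ) * x) ^ 2‖ := Complex.re_le_norm _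
          _ = ‖(t:ℂ) * x‖ ^ 2 := by rw [norm_neg, norm_pow]
          _ ≤ R ^ 2 := by gcongr
      exact mul_le_mul hb1 hb2 (norm_nonneg _) (by positivity)
    · apply intervalIntegrable_const
    · filter_upwards with t ht x hx
      have h := aux_hasDerivAt ((t : ℂ)) x
      simp only [mul_comm] at h ⊢
      refine h.congr_deriv ?_
      ring
  have h := key.const_mul ((2 : ℂ) / (Real.sqrt Real.pi : ℂ))
  exact h

/-- Closed form of the truncated first circular moment of a Gaussian density in terms of the
complex error function. -/
theorem gauss_circular_moment_erf (μ σ : ℝ) (hσ : 0 < σ) :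
    ∫ x in (0 : ℝ)..(2 * Real.pi),
        Complex.exp (Complex.I * (x : ℂ)) * (gaussDensity μ σ x : ℂ) =
      (1 / 2) * Complex.exp (Complex.I * (μ : ℂ) - (σ : ℂ) ^ 2 / 2) *
        (cerf (((μ : ℂ) + Complex.I * (σ : ℂ) ^ 2) / (Real.sqrt 2 * (σ : ℂ))) -
          cerf (((μ : ℂ) - 2 * Real.pi + Complex.I * (σ : ℂ) ^ 2) / (Real.sqrt 2 * (σ : ℂ)))) := by
  set c : ℂ := (μ : ℂ) + Complex.I * (σ : ℂ) ^ 2 with hc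
  set k : ℂ := (Real.sqrt 2 : ℂ) * (σ : ℂ) with hkdef
  set A : ℂ := Complex.I * (μ : ℂ) - (σ : ℂ) ^ 2 / 2 with hA
  have hσ' : (σ : ℂ) ≠ 0 := Complex.ofReal_ne_zero.mpr hσ.ne'
  have hs2 : ((Real.sqrt 2 : ℝ) : ℂ) ≠ 0 := by
    simp [Real.sqrt_eq_zero']
  have hk : k ≠ 0 := mul_ne_zero hs2 hσ'
  have hk2 : k ^ 2 = 2 * (σ : ℂ) ^ 2 := by
    rw [hkdef, mul_pow, ← Complex.ofReal_pow, Real.sq_sqrt (by norm_num : (0:ℝ) ≤ 2)]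
    norm_num
  have hπ : ((Real.sqrt Real.pi : ℝ) : ℂ) ≠ 0 := by
    simp [Real.sqrt_eq_zero', Real.pi_pos.le, Real.pi_pos.ne']
  have hsqrt2pi : ((Real.sqrt (2 * Real.pi) : ℝ) : ℂ) = (Real.sqrt 2 : ℂ) * (Real.sqrt Real.pi : ℂ) := by
    rw [Real.sqrt_mul (by norm_num : (0:ℝ) ≤ 2)]
    push_cast
    ring
  -- the antiderivative
  set F : ℝ → ℂ := fun x => -(1/2) * Complex.exp A * cerf ((c - x) / k) with hFdef
  have hF : ∀ x ∈ Set.uIcc (0:ℝ) (2 * Real.pi), HasDerivAt F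
      (Complex.exp (Complex.I * (x : ℂ)) * (gaussDensity μ σ x : ℂ)) x := by
    intro x _
    have h0 : HasDerivAt (fun w : ℂ => (c - w) / k) (-1 / k) (x : ℂ) := by
      simpa using ((hasDerivAt_id (x:ℂ)).const_sub c).div_const k
    have h1 : HasDerivAt (fun w : ℂ => cerf ((c - w) / k))
        ((2 / (Real.sqrt Real.pi : ℂ)) * Complex.exp (-((c - x) / k) ^ 2) * (-1 / k)) (x : ℂ) :=
      (cerf_hasDerivAt _).comp _ h0
    have h2 := ((h1.const_mul (-(1/2) * Complex.exp A)).comp_ofReal : HasDerivAt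
      (fun y : ℝ => -(1/2) * Complex.exp A * cerf ((c - y) / k)) _ x)
    convert h2 using 1
    -- pointwise identity of the integrand with the derivative
    have hexp : Complex.I * (x:ℂ) + ((-(x - μ)^2 / (2*σ^2) : ℝ) : ℂ) = A + (-((c - x)/k)^2) := by
      rw [div_pow, hk2, hA, hc]
      push_cast
      field_simp
      ring_nf
      rw [Complex.I_sq]
      ring
    calc Complex.exp (Complex.I * (x : ℂ)) * (gaussDensity μ σ x : ℂ)
        = (1 / ((Real.sqrt (2*Real.pi) : ℂ) * σ)) *
            Complex.exp (Complex.I * (x:ℂ) + ((-(x - μ)^2 / (2*σ^2) : ℝ) : ℂ)) := by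
          rw [Complex.exp_add, gaussDensity]
          push_cast
          ring
      _ = -(1/2) * Complex.exp A *
            ((2 / (Real.sqrt Real.pi : ℂ)) * Complex.exp (-((c - x) / k) ^ 2) * (-1 / k)) := by
          rw [hexp, Complex.exp_add, hsqrt2pi, hkdef]
          field_simp
  have hInt : IntervalIntegrable
      (fun x : ℝ => Complex.exp (Complex.I * (x : ℂ)) * (gaussDensity μ σ x : ℂ))
      volume 0 (2 * Real.pi) := by
    apply Continuous.intervalIntegrable
    unfold gaussDensity
    fun_prop
  rw [intervalIntegral.integral_eq_sub_of_hasDerivAt hF hInt]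
  have e1 : c - ((2 * Real.pi : ℝ) : ℂ) = (μ : ℂ) - 2 * Real.pi + Complex.I * (σ : ℂ) ^ 2 := by
    rw [hc]; push_cast; ring
  have e2 : c - ((0 : ℝ) : ℂ) = c := by push_cast; ring
  rw [hFdef]
  simp only [e1, e2]
  ring
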